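/- For all real x > 0, ((x+1)/x)·(1 - ln(x+1)/x) ≥ 1/2; and for all x ∈ (-1, 0), ((x+1)/x)·(1 - ln(x+1)/x) ≤ 1/2. -/

import Mathlib

open Real Set

private lemma aux_hasDerivAt (x : ℝ) (hx : -1 < x) :
    HasDerivAt (fun x : ℝ => (x^2 + 2*x)/(2*(x+1)) - Real.log (x+1))
      (x^2/(2*(x+1)^2)) x := by
  have h1 : x + 1 ≠ 0 := by linarith
  have hlog : HasDerivAt (fun x : ℝ => Real.log (x+1)) (1/(x+1)) x := by
    simpa [Function.comp_def] using (Real.hasDerivAt_log h1).comp x ((hasDerivAt_id x).add_const 1)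
  have hnum : HasDerivAt (fun x : ℝ => x^2 + 2*x) (2*x + 2) x := by
    have := (hasDerivAt_pow 2 x).add ((hasDerivAt_id x).const_mul 2)
    simpa [mul_comm, Pi.add_def] using this
  have hden : HasDerivAt (fun x : ℝ => 2*(x+1)) 2 x := by
    simpa using ((hasDerivAt_id x).add_const 1).const_mul 2
  have hden' : 2*(x+1) ≠ 0 := by positivity
  have hfrac := hnum.div hden hden'
  have := hfrac.sub hlog
  refine this.congr_deriv ?_
  field_simp
  ring

private lemma aux_mono :
    MonotoneOn (fun x : ℝ => (x^2 + 2*x)/(2*(x+1)) - Real.log (x+1)) (Set.Ioi (-1)) := by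
  apply monotoneOn_of_deriv_nonneg (convex_Ioi _)
  · exact fun x hx => ((aux_hasDerivAt x hx).differentiableAt).continuousAt.continuousWithinAt
  · intro x hx
    rw [interior_Ioi] at hx
    exact ((aux_hasDerivAt x hx).differentiableAt).differentiableWithinAt
  · intro x hx
    rw [interior_Ioi] at hx
    rw [(aux_hasDerivAt x hx).deriv]
    have : -1 < x := hx
    positivity

theorem stmt_7 :
    (∀ x : ℝ, 0 < x → (1/2 : ℝ) ≤ (x + 1) / x * (1 - Real.log (x + 1) / x)) ∧
    (∀ x : ℝ, -1 < x → x < 0 → (x + 1) / x * (1 - Real.log (x + 1) / x) ≤ 1/2) := by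
  constructor
  · intro x hx
    have h0 : ((0:ℝ)^2 + 2*0)/(2*(0+1)) - Real.log (0+1) = 0 := by norm_num
    have hm := aux_mono (by norm_num : (0:ℝ) ∈ Set.Ioi (-1))
      (by simp; linarith : x ∈ Set.Ioi (-1)) hx.le
    simp only [h0] at hm
    -- hm : 0 ≤ (x^2+2x)/(2(x+1)) - log(x+1)
    have hx1 : (0:ℝ) < x + 1 := by linarith
    have hL : Real.log (x+1) ≤ (x^2 + 2*x)/(2*(x+1)) := by linarith [hm]
    have hL' : 2*(x+1)*Real.log (x+1) ≤ x^2 + 2*x := by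
      rw [le_div_iff₀ (by positivity)] at hL
      nlinarith [hL]
    have heq : (x + 1) / x * (1 - Real.log (x + 1) / x)
        = (2*(x+1)*(x - Real.log (x+1)))/(2*x^2) := by
      field_simp
    rw [heq, le_div_iff₀ (by positivity)]
    nlinarith [hL']
  · intro x hxm hx0
    have h0 : ((0:ℝ)^2 + 2*0)/(2*(0+1)) - Real.log (0+1) = 0 := by norm_num
    have hm := aux_mono (by simpa using hxm : x ∈ Set.Ioi (-1))
      (by norm_num : (0:ℝ) ∈ Set.Ioi (-1)) hx0.le
    simp only [h0] at hm
    have hx1 : (0:ℝ) < x + 1 := by linarith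
    have hL : (x^2 + 2*x)/(2*(x+1)) ≤ Real.log (x+1) := by linarith [hm]
    have hL' : x^2 + 2*x ≤ 2*(x+1)*Real.log (x+1) := by
      rw [div_le_iff₀ (by positivity)] at hL
      nlinarith [hL]
    have heq : (x + 1) / x * (1 - Real.log (x + 1) / x)
        = (2*(x+1)*(x - Real.log (x+1)))/(2*x^2) := by
      have hxne : x ≠ 0 := ne_of_lt hx0
      field_simp
    have hx2 : (0:ℝ) < 2*x^2 := by nlinarith
    rw [heq, div_le_iff₀ hx2]
    nlinarith [hL']
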